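/- (Sure screening) Under Assumption 1 (min_{(a,b)∈E} |σ_{ab}| ≥ C_1 n^{−κ} for some C_1 > 0, 0 < κ < 1/2), and assuming log(p) = C_3 n^ξ with ξ ∈ (0, 1−2κ), set γ_n = (2/3)C_1 n^{−κ}. Then there exist constants C_4, C_5 > 0 such that P(E ⊆ Ê_{γ_n}) ≥ 1 − C_4 exp(−C_5 n^{1−2κ}), where Ê_{γ_n} = {(a,b): a < b, |X_a^T X_b|/n > γ_n}. -/

import Mathlib

set_option maxHeartbeats 1600000

open MeasureTheory ProbabilityTheory Finset Real
open scoped NNReal ENNReal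



lemma integrable_sq_mul_exp_neg_mul_sq {b : ℝ} (hb : 0 < b) :
    Integrable (fun x : ℝ => x ^ 2 * Real.exp (-b * x ^ 2)) := by
  have h2 : (0:ℝ) < b / 2 := by linarith
  refine Integrable.mono' (((integrable_exp_neg_mul_sq h2).const_mul (2 / b)))
    ?_ (Filter.Eventually.of_forall fun x => ?_)
  · exact ((continuous_pow 2).mul ((continuous_const.mul (continuous_pow 2)).rexp)).aestronglyMeasurable
  · have hx : x ^ 2 ≤ 2 / b * Real.exp (b / 2 * x ^ 2) := by
      have h := Real.add_one_le_exp (b / 2 * x ^ 2)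
      have hby : 0 ≤ b / 2 * x ^ 2 := by positivity
      have : b / 2 * x ^ 2 ≤ Real.exp (b / 2 * x ^ 2) := by linarith
      calc x ^ 2 = 2 / b * (b / 2 * x ^ 2) := by field_simp
        _ ≤ 2 / b * Real.exp (b / 2 * x ^ 2) := by
            apply mul_le_mul_of_nonneg_left this (by positivity)
    have hnn : (0:ℝ) ≤ x ^ 2 * Real.exp (-b * x ^ 2) := by positivity
    rw [Real.norm_eq_abs, abs_of_nonneg hnn]
    calc x ^ 2 * Real.exp (-b * x ^ 2)
        ≤ 2 / b * Real.exp (b / 2 * x ^ 2) * Real.exp (-b * x ^ 2) := by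
          apply mul_le_mul_of_nonneg_right hx (Real.exp_pos _).le
      _ = 2 / b * Real.exp (-(b / 2) * x ^ 2) := by
          rw [mul_assoc, ← Real.exp_add]; ring_nf

lemma integral_sq_mul_exp_neg_mul_sq {b : ℝ} (hb : 0 < b) :
    ∫ x : ℝ, x ^ 2 * Real.exp (-b * x ^ 2) = (2 * b)⁻¹ * Real.sqrt (π / b) := by
  have hb' : (2 * b) ≠ 0 := by positivity
  set F : ℝ → ℝ := fun x => -(2 * b)⁻¹ * (x * Real.exp (-b * x ^ 2)) with hF
  have hderiv : ∀ x : ℝ, HasDerivAt F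
      (x ^ 2 * Real.exp (-b * x ^ 2) - (2 * b)⁻¹ * Real.exp (-b * x ^ 2)) x := by
    intro x
    have h1 : HasDerivAt (fun x : ℝ => -b * x ^ 2) (-b * (2 * x)) x := by
      simpa using ((hasDerivAt_pow 2 x).const_mul (-b))
    have h2 : HasDerivAt (fun x : ℝ => Real.exp (-b * x ^ 2))
        (Real.exp (-b * x ^ 2) * (-b * (2 * x))) x := h1.exp
    have h3 : HasDerivAt (fun x : ℝ => x * Real.exp (-b * x ^ 2))
        (1 * Real.exp (-b * x ^ 2) + x * (Real.exp (-b * x ^ 2) * (-b * (2 * x)))) x :=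
      (hasDerivAt_id x).mul h2
    have h4 := h3.const_mul (-(2 * b)⁻¹)
    convert h4 using 1
    · rfl
    · rfl
    field_simp
    ring
  have hint : Integrable (fun x : ℝ =>
      x ^ 2 * Real.exp (-b * x ^ 2) - (2 * b)⁻¹ * Real.exp (-b * x ^ 2)) :=
    (integrable_sq_mul_exp_neg_mul_sq hb).sub ((integrable_exp_neg_mul_sq hb).const_mul _)
  have hFint : Integrable F := ((integrable_mul_exp_neg_mul_sq hb).const_mul _)
  have hzero := integral_eq_zero_of_hasDerivAt_of_integrable hderiv hint hFint
  have hsplit : ∫ x : ℝ, (x ^ 2 * Real.exp (-b * x ^ 2) - (2 * b)⁻¹ * Real.exp (-b * x ^ 2))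
      = (∫ x : ℝ, x ^ 2 * Real.exp (-b * x ^ 2)) - (2 * b)⁻¹ * ∫ x : ℝ, Real.exp (-b * x ^ 2) := by
    rw [integral_sub (integrable_sq_mul_exp_neg_mul_sq hb)
      ((integrable_exp_neg_mul_sq hb).const_mul _), integral_const_mul]
  rw [hsplit, integral_gaussian] at hzero
  linarith




-- generic: integral against gaussianReal as integral of pdf * g over volume
lemma gaussianReal_integrable_iff (v : ℝ≥0) (hv : v ≠ 0) (g : ℝ → ℝ) :
    Integrable g (gaussianReal 0 v) ↔
      Integrable (fun x => g x * gaussianPDFReal 0 v x) volume := by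
  rw [gaussianReal_of_var_ne_zero _ hv]
  rw [integrable_withDensity_iff (measurable_gaussianPDF 0 v)
    (Filter.Eventually.of_forall fun x => ENNReal.ofReal_lt_top)]
  refine integrable_congr (Filter.Eventually.of_forall fun x => ?_)
  simp only [gaussianPDF_def]; rw [ENNReal.toReal_ofReal (gaussianPDFReal_nonneg 0 v x)]

lemma gaussianReal_integral_eq (v : ℝ≥0) (hv : v ≠ 0) (g : ℝ → ℝ) :
    ∫ x, g x ∂(gaussianReal 0 v) = ∫ x, gaussianPDFReal 0 v x * g x := by
  rw [gaussianReal_of_var_ne_zero _ hv]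
  have : (volume.withDensity (gaussianPDF 0 v)) =
      volume.withDensity (fun x => ((gaussianPDFReal 0 v x).toNNReal : ℝ≥0∞)) := rfl
  rw [this, integral_withDensity_eq_integral_smul
    (measurable_gaussianPDFReal 0 v).real_toNNReal g]
  refine integral_congr_ae (Filter.Eventually.of_forall fun x => ?_)
  simp [NNReal.smul_def, Real.coe_toNNReal _ (gaussianPDFReal_nonneg 0 v x)]




section helper
variable (b : ℝ)

lemma my_integrable_dirac {f : ℝ → ℝ} (hf : Measurable f) (a : ℝ) :
    Integrable f (Measure.dirac a) := by
  refine ⟨hf.aestronglyMeasurable, ?_⟩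
  rw [HasFiniteIntegral, lintegral_dirac' a (by measurability)]
  exact ENNReal.coe_lt_top

end helper

-- assume previous lemmas available; for this test file, restate as axioms
lemma pdf_key (v : ℝ≥0) (hv : v ≠ 0) (c x : ℝ) :
    gaussianPDFReal 0 v x * Real.exp (c * x ^ 2) =
      (Real.sqrt (2 * π * v))⁻¹ * Real.exp (-((2 * (v:ℝ))⁻¹ - c) * x ^ 2) := by
  have hv' : (0:ℝ) < v := lt_of_le_of_ne (v.coe_nonneg) (by exact_mod_cast (Ne.symm hv))
  rw [gaussianPDFReal, mul_assoc, ← Real.exp_add]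
  congr 1
  field_simp
  ring

lemma gaussianReal_exp_sq (v : ℝ≥0) {c : ℝ} (hc : 2 * c * (v:ℝ) < 1) :
    Integrable (fun x : ℝ => Real.exp (c * x ^ 2)) (gaussianReal 0 v) ∧
    ∫ x, Real.exp (c * x ^ 2) ∂(gaussianReal 0 v) = (Real.sqrt (1 - 2 * c * v))⁻¹ := by
  by_cases hv : v = 0
  · subst hv
    rw [gaussianReal_zero_var]
    constructor
    · exact my_integrable_dirac (by measurability) 0
    · rw [integral_dirac]
      norm_num
  · have hv' : (0:ℝ) < v := lt_of_le_of_ne (v.coe_nonneg) (by exact_mod_cast (Ne.symm hv))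
    set b : ℝ := (2 * (v:ℝ))⁻¹ - c with hbdef
    have hb : 0 < b := by
      rw [hbdef, sub_pos, show ((2:ℝ) * (v:ℝ))⁻¹ = 1 / (2 * v) by ring,
        lt_div_iff₀ (by positivity)]
      linarith
    have h2vb : 2 * (v:ℝ) * b = 1 - 2 * c * v := by
      rw [hbdef]; field_simp
    have key : ∀ x : ℝ, gaussianPDFReal 0 v x * Real.exp (c * x ^ 2) =
        (Real.sqrt (2 * π * v))⁻¹ * Real.exp (-b * x ^ 2) := pdf_key v hv c
    constructor
    · rw [gaussianReal_integrable_iff v hv]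
      refine (integrable_congr (Filter.Eventually.of_forall fun x => ?_)).mpr
        (((integrable_exp_neg_mul_sq hb).const_mul (Real.sqrt (2 * π * v))⁻¹))
      rw [mul_comm, key x]
    · rw [gaussianReal_integral_eq v hv]
      calc ∫ x, gaussianPDFReal 0 v x * Real.exp (c * x ^ 2)
          = ∫ x, (Real.sqrt (2 * π * v))⁻¹ * Real.exp (-b * x ^ 2) := by
            exact integral_congr_ae (Filter.Eventually.of_forall fun x => key x)
        _ = (Real.sqrt (2 * π * v))⁻¹ * Real.sqrt (π / b) := by
            rw [integral_const_mul, integral_gaussian]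
        _ = (Real.sqrt (1 - 2 * c * v))⁻¹ := by
            rw [← Real.sqrt_inv, ← Real.sqrt_mul (by positivity), ← Real.sqrt_inv]
            congr 1
            rw [← h2vb]
            field_simp

lemma gaussianReal_sq (v : ℝ≥0) :
    Integrable (fun x : ℝ => x ^ 2) (gaussianReal 0 v) ∧
    ∫ x, x ^ 2 ∂(gaussianReal 0 v) = v := by
  by_cases hv : v = 0
  · subst hv
    rw [gaussianReal_zero_var]
    refine ⟨my_integrable_dirac (by measurability) 0, ?_⟩
    rw [integral_dirac]
    norm_num
  · have hv' : (0:ℝ) < v := lt_of_le_of_ne (v.coe_nonneg) (by exact_mod_cast (Ne.symm hv))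
    set b : ℝ := (2 * (v:ℝ))⁻¹ with hbdef
    have hb : 0 < b := by positivity
    have key : ∀ x : ℝ, gaussianPDFReal 0 v x * x ^ 2 =
        (Real.sqrt (2 * π * v))⁻¹ * (x ^ 2 * Real.exp (-b * x ^ 2)) := by
      intro x
      rw [gaussianPDFReal]
      have harg : -(x - 0) ^ 2 / (2 * (v:ℝ)) = -b * x ^ 2 := by
        rw [hbdef]; field_simp; ring
      rw [harg]; ring
    constructor
    · rw [gaussianReal_integrable_iff v hv]
      refine (integrable_congr (Filter.Eventually.of_forall fun x => ?_)).mpr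
        (((integrable_sq_mul_exp_neg_mul_sq hb).const_mul (Real.sqrt (2 * π * v))⁻¹))
      rw [mul_comm, key x]
    · rw [gaussianReal_integral_eq v hv]
      calc ∫ x, gaussianPDFReal 0 v x * x ^ 2
          = ∫ x, (Real.sqrt (2 * π * v))⁻¹ * (x ^ 2 * Real.exp (-b * x ^ 2)) := by
            exact integral_congr_ae (Filter.Eventually.of_forall fun x => key x)
        _ = (Real.sqrt (2 * π * v))⁻¹ * ((2 * b)⁻¹ * Real.sqrt (π / b)) := by
            rw [integral_const_mul, integral_sq_mul_exp_neg_mul_sq hb]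
        _ = (v:ℝ) := by
            have h1 : (2 * b)⁻¹ = (v:ℝ) := by rw [hbdef]; field_simp
            rw [h1, mul_comm, mul_assoc]
            rw [← Real.sqrt_inv, ← Real.sqrt_mul (by positivity)]
            have : (π / b) * (2 * π * (v:ℝ))⁻¹ = 1 := by
              rw [hbdef]; field_simp
            rw [this, Real.sqrt_one, mul_one]




section transfer
variable {Ω : Type*} [MeasurableSpace Ω] {μ : Measure Ω} {G : Ω → ℝ}

lemma map_gaussian_exp_sq (hG : Measurable G) {s : ℝ≥0}
    (h : Measure.map G μ = gaussianReal 0 s) {c : ℝ} (hc : 2 * c * (s:ℝ) < 1) :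
    Integrable (fun ω => Real.exp (c * G ω ^ 2)) μ ∧
    ∫ ω, Real.exp (c * G ω ^ 2) ∂μ = (Real.sqrt (1 - 2 * c * s))⁻¹ := by
  have hf : Continuous fun x : ℝ => Real.exp (c * x ^ 2) :=
    (continuous_const.mul (continuous_pow 2)).rexp
  constructor
  · have h1 := (gaussianReal_exp_sq s hc).1
    rw [← h] at h1
    exact (integrable_map_measure hf.aestronglyMeasurable hG.aemeasurable).mp h1
  · rw [← integral_map hG.aemeasurable hf.aestronglyMeasurable, h]
    exact (gaussianReal_exp_sq s hc).2

lemma map_gaussian_sq (hG : Measurable G) {s : ℝ≥0}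
    (h : Measure.map G μ = gaussianReal 0 s) :
    Integrable (fun ω => G ω ^ 2) μ ∧ ∫ ω, G ω ^ 2 ∂μ = s := by
  have hf : Continuous fun x : ℝ => x ^ 2 := continuous_pow 2
  constructor
  · have h1 := (gaussianReal_sq s).1
    rw [← h] at h1
    exact (integrable_map_measure hf.aestronglyMeasurable hG.aemeasurable).mp h1
  · rw [← integral_map hG.aemeasurable hf.aestronglyMeasurable, h]
    exact (gaussianReal_sq s).2

end transfer

lemma inv_sqrt_one_sub_le {x : ℝ} (hx : |x| ≤ 1/2) :
    (Real.sqrt (1 - x))⁻¹ ≤ Real.exp (x/2 + x^2) := by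
  rw [abs_le] at hx
  have hpos : (0:ℝ) < 1 - x := by linarith
  have h0 : (1-x)⁻¹ ≤ Real.exp (x + 2*x^2) := by
    have e2 : x/(1-x) + 1 = (1-x)⁻¹ := by field_simp; ring
    have e1 : x/(1-x) + 1 ≤ Real.exp (x/(1-x)) := Real.add_one_le_exp _
    have e3 : x/(1-x) ≤ x + 2*x^2 := by
      have hxx : x/(1-x) - x = x^2/(1-x) := by field_simp; ring
      have hxx2 : x^2/(1-x) ≤ 2*x^2 := by
        rw [div_le_iff₀ hpos]; nlinarith
      linarith
    calc (1-x)⁻¹ = x/(1-x) + 1 := e2.symm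
      _ ≤ Real.exp (x/(1-x)) := e1
      _ ≤ Real.exp (x + 2*x^2) := Real.exp_le_exp.2 e3
  calc (Real.sqrt (1-x))⁻¹ = Real.sqrt ((1-x)⁻¹) := (Real.sqrt_inv _).symm
    _ ≤ Real.sqrt (Real.exp (x + 2*x^2)) := Real.sqrt_le_sqrt h0
    _ = Real.exp ((x + 2*x^2)/2) := (Real.exp_half _).symm
    _ = Real.exp (x/2 + x^2) := by congr 1; ring

lemma cosh_le_exp_sq {t : ℝ} (ht : |t| ≤ 1) :
    (Real.exp t + Real.exp (-t))/2 ≤ Real.exp (t^2) := by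
  have h1 := Real.exp_bound ht (by norm_num : 0 < 2)
  have h2 := Real.exp_bound (x := -t) (by rwa [abs_neg]) (by norm_num : 0 < 2)
  simp only [Finset.sum_range_succ, Finset.sum_range_zero] at h1 h2
  norm_num at h1 h2
  rw [abs_le] at h1 h2
  have hsq : |t| ^ 2 = t ^ 2 := sq_abs t
  have hsqn : |(-t)| ^ 2 = t ^ 2 := by rw [abs_neg, sq_abs]
  have hb1 : Real.exp t ≤ 1 + t + t^2 * (3/4) := by nlinarith [h1.2]
  have hb2 : Real.exp (-t) ≤ 1 - t + t^2 * (3/4) := by nlinarith [h2.2]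
  have hfin : 1 + t^2 ≤ Real.exp (t^2) := by
    have := Real.add_one_le_exp (t^2); linarith
  nlinarith [sq_nonneg t]




lemma core_mgf {Ω : Type*} [MeasurableSpace Ω] (μ : Measure Ω) [IsProbabilityMeasure μ]
    (Y Z : Ω → ℝ) (hY : Measurable Y) (hZ : Measurable Z) (σ : ℝ)
    (hAg : ∃ s : ℝ≥0, Measure.map (fun ω => Y ω + Z ω) μ = gaussianReal 0 s)
    (hBg : ∃ s : ℝ≥0, Measure.map (fun ω => Y ω - Z ω) μ = gaussianReal 0 s)
    (hY2 : ∫ ω, Y ω * Y ω ∂μ = 1) (hZ2 : ∫ ω, Z ω * Z ω ∂μ = 1)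
    (hYZint : Integrable (fun ω => Y ω * Z ω) μ)
    (hY2int : Integrable (fun ω => Y ω * Y ω) μ)
    (hZ2int : Integrable (fun ω => Z ω * Z ω) μ)
    (hYZ : ∫ ω, Y ω * Z ω ∂μ = σ) {t : ℝ} (ht : |t| ≤ 1/8) :
    Integrable (fun ω => Real.exp (t * (Y ω * Z ω))) μ ∧
    mgf (fun ω => Y ω * Z ω) μ t ≤ Real.exp (σ * t + 20 * t ^ 2) := by
  obtain ⟨sA, hmA⟩ := hAg
  obtain ⟨sB, hmB⟩ := hBg
  -- identify the variances
  have hsumA : ∫ ω, (Y ω + Z ω) ^ 2 ∂μ = (sA : ℝ) := (map_gaussian_sq (hY.add hZ) hmA).2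
  have hsumB : ∫ ω, (Y ω - Z ω) ^ 2 ∂μ = (sB : ℝ) := (map_gaussian_sq (hY.sub hZ) hmB).2
  have hexpA : ∫ ω, (Y ω + Z ω) ^ 2 ∂μ = 2 + 2 * σ := by
    have e1 : (fun ω => (Y ω + Z ω) ^ 2)
        = fun ω => Y ω * Y ω + (2 * (Y ω * Z ω) + Z ω * Z ω) := by
      funext ω; ring
    have i1 : ∫ ω, (Y ω * Y ω + (2 * (Y ω * Z ω) + Z ω * Z ω)) ∂μ
        = (∫ ω, Y ω * Y ω ∂μ) + ∫ ω, (2 * (Y ω * Z ω) + Z ω * Z ω) ∂μ :=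
      integral_add hY2int ((hYZint.const_mul 2).add hZ2int)
    have i2 : ∫ ω, (2 * (Y ω * Z ω) + Z ω * Z ω) ∂μ
        = (∫ ω, 2 * (Y ω * Z ω) ∂μ) + ∫ ω, Z ω * Z ω ∂μ :=
      integral_add (hYZint.const_mul 2) hZ2int
    rw [e1, i1, i2, integral_const_mul, hY2, hZ2, hYZ]
    ring
  have hexpB : ∫ ω, (Y ω - Z ω) ^ 2 ∂μ = 2 - 2 * σ := by
    have e1 : (fun ω => (Y ω - Z ω) ^ 2)
        = fun ω => Y ω * Y ω + ((-2) * (Y ω * Z ω) + Z ω * Z ω) := by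
      funext ω; ring
    have i1 : ∫ ω, (Y ω * Y ω + ((-2) * (Y ω * Z ω) + Z ω * Z ω)) ∂μ
        = (∫ ω, Y ω * Y ω ∂μ) + ∫ ω, ((-2) * (Y ω * Z ω) + Z ω * Z ω) ∂μ :=
      integral_add hY2int ((hYZint.const_mul (-2)).add hZ2int)
    have i2 : ∫ ω, ((-2) * (Y ω * Z ω) + Z ω * Z ω) ∂μ
        = (∫ ω, (-2) * (Y ω * Z ω) ∂μ) + ∫ ω, Z ω * Z ω ∂μ :=
      integral_add (hYZint.const_mul (-2)) hZ2int
    rw [e1, i1, i2, integral_const_mul, hY2, hZ2, hYZ]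
    ring
  have hvA : (sA : ℝ) = 2 + 2 * σ := by rw [← hsumA, hexpA]
  have hvB : (sB : ℝ) = 2 - 2 * σ := by rw [← hsumB, hexpB]
  have hvA0 : (0:ℝ) ≤ (sA:ℝ) := sA.coe_nonneg
  have hvB0 : (0:ℝ) ≤ (sB:ℝ) := sB.coe_nonneg
  have hvA4 : (sA:ℝ) ≤ 4 := by linarith
  have hvB4 : (sB:ℝ) ≤ 4 := by linarith
  have habs := abs_le.mp ht
  -- mgf conditions
  have hcA : 2 * (t/2) * (sA:ℝ) < 1 := by nlinarith
  have hcB : 2 * (-t/2) * (sB:ℝ) < 1 := by nlinarith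
  have gA := map_gaussian_exp_sq (hY.add hZ) hmA hcA
  have gB := map_gaussian_exp_sq (hY.sub hZ) hmB hcB
  -- pointwise AM-GM bound
  have key : ∀ ω, Real.exp (t * (Y ω * Z ω)) ≤
      (Real.exp (t/2 * (Y ω + Z ω) ^ 2) + Real.exp (-t/2 * (Y ω - Z ω) ^ 2)) / 2 := by
    intro ω
    set P := t/2 * (Y ω + Z ω) ^ 2 with hP
    set Q := -t/2 * (Y ω - Z ω) ^ 2 with hQ
    have hPQ : t * (Y ω * Z ω) = (P + Q) / 2 := by rw [hP, hQ]; ring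
    rw [hPQ, Real.exp_half, Real.exp_add]
    have h1 : Real.exp P * Real.exp Q ≤ ((Real.exp P + Real.exp Q)/2)^2 := by
      nlinarith [sq_nonneg (Real.exp P - Real.exp Q)]
    calc Real.sqrt (Real.exp P * Real.exp Q)
        ≤ Real.sqrt (((Real.exp P + Real.exp Q)/2)^2) := Real.sqrt_le_sqrt h1
      _ = (Real.exp P + Real.exp Q)/2 := Real.sqrt_sq (by positivity)
  have hint : Integrable (fun ω => Real.exp (t * (Y ω * Z ω))) μ := by
    refine Integrable.mono' ((gA.1.add gB.1).div_const 2)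
      (((hY.mul hZ).const_mul t).exp.aestronglyMeasurable)
      (Filter.Eventually.of_forall fun ω => ?_)
    rw [Real.norm_eq_abs, abs_of_pos (Real.exp_pos _)]
    exact key ω
  refine ⟨hint, ?_⟩
  have hmgf : mgf (fun ω => Y ω * Z ω) μ t = ∫ ω, Real.exp (t * (Y ω * Z ω)) ∂μ := rfl
  rw [hmgf]
  calc ∫ ω, Real.exp (t * (Y ω * Z ω)) ∂μ
      ≤ ∫ ω, (Real.exp (t/2 * (Y ω + Z ω) ^ 2) + Real.exp (-t/2 * (Y ω - Z ω) ^ 2)) / 2 ∂μ :=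
        integral_mono hint ((gA.1.add gB.1).div_const 2) key
    _ = ((Real.sqrt (1 - 2 * (t/2) * sA))⁻¹ + (Real.sqrt (1 - 2 * (-t/2) * sB))⁻¹) / 2 := by
        rw [integral_div, integral_add (f := fun ω => Real.exp (t/2 * (Y ω + Z ω) ^ 2)) (g := fun ω => Real.exp (-t/2 * (Y ω - Z ω) ^ 2)) gA.1 gB.1, show ∫ ω, Real.exp (t/2 * (Y ω + Z ω) ^ 2) ∂μ = _ from gA.2, show ∫ ω, Real.exp (-t/2 * (Y ω - Z ω) ^ 2) ∂μ = _ from gB.2]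
    _ ≤ Real.exp (σ * t + 20 * t ^ 2) := by
        have hA1 : 1 - 2 * (t/2) * (sA:ℝ) = 1 - t * sA := by ring
        have hB1 : 1 - 2 * (-t/2) * (sB:ℝ) = 1 - (-(t * sB)) := by ring
        have htsA : |t * (sA:ℝ)| ≤ 1/2 := by
          rw [abs_mul, abs_of_nonneg hvA0]
          calc |t| * (sA:ℝ) ≤ (1/8) * 4 := mul_le_mul ht hvA4 hvA0 (by norm_num)
            _ = 1/2 := by norm_num
        have htsB : |t * (sB:ℝ)| ≤ 1/2 := by
          rw [abs_mul, abs_of_nonneg hvB0]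
          calc |t| * (sB:ℝ) ≤ (1/8) * 4 := mul_le_mul ht hvB4 hvB0 (by norm_num)
            _ = 1/2 := by norm_num
        have eA : (Real.sqrt (1 - 2 * (t/2) * sA))⁻¹ ≤
            Real.exp (t * sA / 2 + (t * sA)^2) := by
          rw [hA1]
          exact inv_sqrt_one_sub_le htsA
        have eB : (Real.sqrt (1 - 2 * (-t/2) * sB))⁻¹ ≤
            Real.exp (-(t * sB) / 2 + (t * sB)^2) := by
          rw [hB1]
          have h := inv_sqrt_one_sub_le (x := -(t * (sB:ℝ))) (by rwa [abs_neg])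
          simpa only [neg_sq] using h
        have hA16 : ((sA:ℝ))^2 ≤ 16 := by nlinarith
        have hB16 : ((sB:ℝ))^2 ≤ 16 := by nlinarith
        have hAsq : (t * (sA:ℝ))^2 ≤ 16 * t^2 := by
          rw [mul_pow]
          calc t^2 * (sA:ℝ)^2 ≤ t^2 * 16 := mul_le_mul_of_nonneg_left hA16 (sq_nonneg t)
            _ = 16 * t^2 := by ring
        have hBsq : (t * (sB:ℝ))^2 ≤ 16 * t^2 := by
          rw [mul_pow]
          calc t^2 * (sB:ℝ)^2 ≤ t^2 * 16 := mul_le_mul_of_nonneg_left hB16 (sq_nonneg t)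
            _ = 16 * t^2 := by ring
        have eA2 : (Real.sqrt (1 - 2 * (t/2) * sA))⁻¹ ≤ Real.exp (σ * t + 16 * t^2 + t) := by
          refine eA.trans (Real.exp_le_exp.2 ?_)
          have : t * (sA:ℝ) / 2 = σ * t + t := by rw [hvA]; ring
          linarith
        have eB2 : (Real.sqrt (1 - 2 * (-t/2) * sB))⁻¹ ≤ Real.exp (σ * t + 16 * t^2 + (-t)) := by
          refine eB.trans (Real.exp_le_exp.2 ?_)
          have : -(t * (sB:ℝ)) / 2 = σ * t + (-t) := by rw [hvB]; ring
          linarith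
        have hcosh := cosh_le_exp_sq (t := t) (by rw [abs_le]; constructor <;> linarith)
        calc ((Real.sqrt (1 - 2 * (t/2) * sA))⁻¹ + (Real.sqrt (1 - 2 * (-t/2) * sB))⁻¹) / 2
            ≤ (Real.exp (σ * t + 16 * t^2 + t) + Real.exp (σ * t + 16 * t^2 + (-t))) / 2 := by
              linarith
          _ = Real.exp (σ * t + 16 * t^2) * ((Real.exp t + Real.exp (-t))/2) := by
              rw [Real.exp_add (σ * t + 16 * t^2) t, Real.exp_add (σ * t + 16 * t^2) (-t)]
              ring
          _ ≤ Real.exp (σ * t + 16 * t^2) * Real.exp (t^2) := by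
              exact mul_le_mul_of_nonneg_left hcosh (Real.exp_pos _).le
          _ = Real.exp (σ * t + 17 * t^2) := by rw [← Real.exp_add]; ring_nf
          _ ≤ Real.exp (σ * t + 20 * t ^ 2) := Real.exp_le_exp.2 (by nlinarith [sq_nonneg t])




lemma edge_tail {Ω : Type*} [MeasurableSpace Ω] (μ : Measure Ω) [IsProbabilityMeasure μ]
    (n : ℕ) (W : Fin n → Ω → ℝ) (hW : ∀ i, Measurable (W i))
    (hindep : iIndepFun W μ) (σ : ℝ)
    (hmgf : ∀ (i : Fin n) (t : ℝ), |t| ≤ 1/8 →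
      Integrable (fun ω => Real.exp (t * W i ω)) μ ∧ mgf (W i) μ t ≤ Real.exp (σ * t + 20 * t^2))
    (ε : ℝ) (hε : 0 < ε) :
    (μ {ω | (∑ i, W i ω) ≤ n * (σ - ε)}).toReal ≤
        Real.exp (- (min (ε^2/80) (ε/16)) * n) ∧
    (μ {ω | (n : ℝ) * (σ + ε) ≤ (∑ i, W i ω)}).toReal ≤
        Real.exp (- (min (ε^2/80) (ε/16)) * n) := by
  set u : ℝ := min (ε/40) (1/8) with hu_def
  have hu0 : 0 < u := lt_min (by positivity) (by norm_num)
  have hu8 : u ≤ 1/8 := min_le_right _ _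
  have huabs : |u| ≤ 1/8 := by rw [abs_of_pos hu0]; exact hu8
  have hnuabs : |(-u)| ≤ 1/8 := by rwa [abs_neg]
  -- the exponent bound
  have hexp : (n:ℝ) * (-(u * ε) + 20 * u^2) ≤ - (min (ε^2/80) (ε/16)) * n := by
    have hcase : -(u * ε) + 20 * u^2 ≤ - (min (ε^2/80) (ε/16)) := by
      rcases le_total ε 5 with h5 | h5
      · have humin : u = ε/40 := min_eq_left (by linarith)
        have : min (ε^2/80) (ε/16) ≤ ε^2/80 := min_le_left _ _
        rw [humin]
        nlinarith
      · have humin : u = 1/8 := min_eq_right (by linarith)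
        have : min (ε^2/80) (ε/16) ≤ ε/16 := min_le_right _ _
        rw [humin]
        nlinarith
    calc (n:ℝ) * (-(u * ε) + 20 * u^2) ≤ (n:ℝ) * (- (min (ε^2/80) (ε/16))) :=
          mul_le_mul_of_nonneg_left hcase (Nat.cast_nonneg n)
      _ = - (min (ε^2/80) (ε/16)) * n := by ring
  -- integrability of exp of sums
  have hsum_int : ∀ t : ℝ, |t| ≤ 1/8 →
      Integrable (fun ω => Real.exp (t * (∑ i ∈ univ, W i) ω)) μ := by
    intro t ht
    exact hindep.integrable_exp_mul_sum hW (fun i _ => (hmgf i t ht).1)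
  have hmgf_sum : ∀ t : ℝ, |t| ≤ 1/8 →
      mgf (∑ i ∈ univ, W i) μ t ≤ Real.exp ((n:ℝ) * (σ * t + 20 * t^2)) := by
    intro t ht
    rw [hindep.mgf_sum hW univ]
    calc ∏ i : Fin n, mgf (W i) μ t ≤ ∏ _i : Fin n, Real.exp (σ * t + 20 * t^2) :=
          Finset.prod_le_prod (fun i _ => mgf_nonneg) (fun i _ => (hmgf i t ht).2)
      _ = Real.exp ((n:ℝ) * (σ * t + 20 * t^2)) := by
          rw [Finset.prod_const, ← Real.exp_nat_mul]
          simp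
  have hfun : ∀ ω, (∑ i ∈ univ, W i) ω = ∑ i, W i ω := fun ω => by
    simp [Finset.sum_apply]
  constructor
  · -- lower tail, t = -u
    have hch := measure_le_le_exp_mul_mgf (μ := μ) (X := ∑ i ∈ univ, W i)
      ((n:ℝ) * (σ - ε)) (neg_nonpos.mpr hu0.le) (hsum_int (-u) hnuabs)
    have hset : {ω | (∑ i ∈ univ, W i) ω ≤ (n:ℝ) * (σ - ε)}
        = {ω | (∑ i, W i ω) ≤ (n:ℝ) * (σ - ε)} := by
      ext ω; simp [hfun ω]
    rw [hset] at hch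
    refine hch.trans ?_
    calc Real.exp (-(-u) * ((n:ℝ) * (σ - ε))) * mgf (∑ i ∈ univ, W i) μ (-u)
        ≤ Real.exp (u * ((n:ℝ) * (σ - ε))) * Real.exp ((n:ℝ) * (σ * (-u) + 20 * (-u)^2)) := by
          rw [neg_neg]
          exact mul_le_mul_of_nonneg_left (hmgf_sum (-u) hnuabs) (Real.exp_pos _).le
      _ = Real.exp ((n:ℝ) * (-(u * ε) + 20 * u^2)) := by
          rw [← Real.exp_add]; congr 1; ring
      _ ≤ Real.exp (- (min (ε^2/80) (ε/16)) * n) := Real.exp_le_exp.2 hexp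
  · -- upper tail, t = u
    have hch := measure_ge_le_exp_mul_mgf (μ := μ) (X := ∑ i ∈ univ, W i)
      ((n:ℝ) * (σ + ε)) hu0.le (hsum_int u huabs)
    have hset : {ω | (n:ℝ) * (σ + ε) ≤ (∑ i ∈ univ, W i) ω}
        = {ω | (n:ℝ) * (σ + ε) ≤ (∑ i, W i ω)} := by
      ext ω; simp [hfun ω]
    rw [hset] at hch
    refine hch.trans ?_
    calc Real.exp (-u * ((n:ℝ) * (σ + ε))) * mgf (∑ i ∈ univ, W i) μ u
        ≤ Real.exp (-u * ((n:ℝ) * (σ + ε))) * Real.exp ((n:ℝ) * (σ * u + 20 * u^2)) :=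
          mul_le_mul_of_nonneg_left (hmgf_sum u huabs) (Real.exp_pos _).le
      _ = Real.exp ((n:ℝ) * (-(u * ε) + 20 * u^2)) := by
          rw [← Real.exp_add]; congr 1; ring
      _ ≤ Real.exp (- (min (ε^2/80) (ε/16)) * n) := Real.exp_le_exp.2 hexp




lemma growth_bound (c₀ C₃ ξ δ : ℝ) (hc₀ : 0 < c₀) (hC₃ : 0 < C₃) (hξ : 0 < ξ) (hδ : ξ < δ) :
    ∃ K : ℝ, 0 ≤ K ∧ ∀ n : ℕ, 1 ≤ n → 2 * C₃ * (n:ℝ) ^ ξ ≤ c₀/2 * (n:ℝ) ^ δ + K := by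
  have hδ0 : 0 < δ := lt_trans hξ hδ
  set θ : ℝ := ξ / δ with hθdef
  have hθ0 : 0 < θ := div_pos hξ hδ0
  have hθ1 : θ < 1 := (div_lt_one hδ0).mpr hδ
  set A : ℝ := max 1 ((4 * C₃ / c₀) ^ (1/(1 - θ))) with hAdef
  have hA1 : (1:ℝ) ≤ A := le_max_left _ _
  have hA0 : (0:ℝ) < A := lt_of_lt_of_le one_pos hA1
  have hApow : 4 * C₃ / c₀ ≤ A ^ (1 - θ) := by
    have h1 : (4 * C₃ / c₀) ^ (1/(1 - θ)) ≤ A := le_max_right _ _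
    have h2 : ((4 * C₃ / c₀) ^ (1/(1 - θ))) ^ (1 - θ) ≤ A ^ (1 - θ) :=
      Real.rpow_le_rpow (Real.rpow_nonneg (by positivity) _) h1 (by linarith)
    rwa [← Real.rpow_mul (by positivity), one_div, inv_mul_cancel₀ (by linarith), Real.rpow_one] at h2
  have hcoef : 2 * C₃ * A ^ (θ - 1) ≤ c₀ / 2 := by
    have hApos : (0:ℝ) < A ^ (1 - θ) := Real.rpow_pos_of_pos hA0 _
    have h1 : A ^ (θ - 1) = (A ^ (1 - θ))⁻¹ := by
      rw [show θ - 1 = -(1 - θ) by ring, Real.rpow_neg hA0.le]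
    have h2 : (A ^ (1 - θ))⁻¹ ≤ (4 * C₃ / c₀)⁻¹ :=
      inv_anti₀ (by positivity) hApow
    rw [h1]
    calc 2 * C₃ * (A ^ (1 - θ))⁻¹ ≤ 2 * C₃ * (4 * C₃ / c₀)⁻¹ :=
          mul_le_mul_of_nonneg_left h2 (by positivity)
      _ = c₀ / 2 := by field_simp; ring
  refine ⟨2 * C₃ * A ^ θ, by positivity, fun n hn => ?_⟩
  have hn1 : (1:ℝ) ≤ (n:ℝ) := by exact_mod_cast hn
  have hn0 : (0:ℝ) < (n:ℝ) := by linarith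
  set y : ℝ := (n:ℝ) ^ δ with hydef
  have hy1 : (1:ℝ) ≤ y := Real.one_le_rpow hn1 hδ0.le
  have hy0 : (0:ℝ) < y := by linarith
  have hnξ : (n:ℝ) ^ ξ = y ^ θ := by
    rw [hydef, ← Real.rpow_mul hn0.le, hθdef, mul_div_cancel₀ _ hδ0.ne']
  have hyθ : y ^ θ ≤ A ^ (θ - 1) * y + A ^ θ := by
    rcases le_total y A with h | h
    · have : y ^ θ ≤ A ^ θ := Real.rpow_le_rpow hy0.le h hθ0.le
      have h2 : 0 ≤ A ^ (θ - 1) * y := by positivity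
      linarith
    · have h1 : y ^ θ = y ^ (θ - 1) * y := by
        rw [← Real.rpow_add_one hy0.ne' (θ - 1)]
        congr 1; ring
      have h2 : y ^ (θ - 1) ≤ A ^ (θ - 1) :=
        Real.rpow_le_rpow_of_nonpos hA0 h (by linarith)
      have h3 : 0 ≤ A ^ θ := (Real.rpow_pos_of_pos hA0 _).le
      calc y ^ θ = y ^ (θ - 1) * y := h1
        _ ≤ A ^ (θ - 1) * y := mul_le_mul_of_nonneg_right h2 (by linarith)
        _ ≤ A ^ (θ - 1) * y + A ^ θ := by linarith
  calc 2 * C₃ * (n:ℝ) ^ ξ = 2 * C₃ * y ^ θ := by rw [hnξ]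
    _ ≤ 2 * C₃ * (A ^ (θ - 1) * y + A ^ θ) :=
        mul_le_mul_of_nonneg_left hyθ (by positivity)
    _ = (2 * C₃ * A ^ (θ - 1)) * y + 2 * C₃ * A ^ θ := by ring
    _ ≤ c₀ / 2 * y + 2 * C₃ * A ^ θ := by
        have := mul_le_mul_of_nonneg_right hcoef hy0.le
        linarith




lemma sum_single {p : ℕ} (a : Fin p) (v : Fin p → ℝ) :
    ∑ j, (if j = a then (1:ℝ) else 0) * v j = v a := by
  simp [ite_mul]

lemma sum_pair_add {p : ℕ} (a b : Fin p) (hab : a ≠ b) (v : Fin p → ℝ) :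
    ∑ j, ((if j = a then (1:ℝ) else 0) + (if j = b then 1 else 0)) * v j = v a + v b := by
  simp [add_mul, Finset.sum_add_distrib, ite_mul]

lemma sum_pair_sub {p : ℕ} (a b : Fin p) (hab : a ≠ b) (v : Fin p → ℝ) :
    ∑ j, ((if j = a then (1:ℝ) else 0) - (if j = b then 1 else 0)) * v j = v a - v b := by
  simp [sub_mul, Finset.sum_sub_distrib, ite_mul]

/-- Sure screening property of GRASS:  under the minimum-signal assumption
`min_{(a,b)∈E} |σ_ab| ≥ C₁ n^{−κ}` and the growth condition
`log p = C₃ n^ξ`, `ξ ∈ (0, 1−2κ)`, with threshold `γₙ = (2/3) C₁ n^{−κ}`,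
there are constants `C₄, C₅ > 0` with
`P(E ⊆ Ê_{γₙ}) ≥ 1 − C₄ exp(−C₅ n^{1−2κ})`. -/
theorem grass_sure_screening
    {Ω : Type*} [MeasurableSpace Ω] (μ : Measure Ω) [IsProbabilityMeasure μ]
    (κ C₁ C₃ ξ : ℝ) (hκ : 0 < κ ∧ κ < 1 / 2) (hC₁ : 0 < C₁) (hC₃ : 0 < C₃)
    (hξ : 0 < ξ ∧ ξ < 1 - 2 * κ) :
    ∃ C₄ : ℝ, 0 < C₄ ∧ ∃ C₅ : ℝ, 0 < C₅ ∧
      ∀ (n p : ℕ) (X : Fin n → Ω → Fin p → ℝ)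
        (S : Matrix (Fin p) (Fin p) ℝ) (E : Finset (Fin p × Fin p)),
        0 < n →
        Real.log p = C₃ * (n : ℝ) ^ ξ →
        (∀ i, Measurable (X i)) →
        iIndepFun X μ →
        (∀ i : Fin n, ∀ l : Fin p → ℝ, ∃ s : NNReal,
          Measure.map (fun ω => ∑ j, l j * X i ω j) μ = gaussianReal 0 s) →
        (∀ (i : Fin n) (j k : Fin p), ∫ ω, X i ω j * X i ω k ∂μ = S j k) →
        (∀ j, S j j = 1) →
        S.PosDef →
        -- `E` is the edge set of the Gaussian graphical model:
        (∀ a b : Fin p, (a, b) ∈ E ↔ a < b ∧ S⁻¹ a b ≠ 0) →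
        -- Assumption 1 (minimum signal):
        (∀ e ∈ E, C₁ * (n : ℝ) ^ (-κ) ≤ |S e.1 e.2|) →
        1 - C₄ * Real.exp (-C₅ * (n : ℝ) ^ (1 - 2 * κ)) ≤
          (μ {ω | ∀ e ∈ E,
              (2 / 3) * C₁ * (n : ℝ) ^ (-κ) <
                |∑ i, X i ω e.1 * X i ω e.2| / n}).toReal := by
  obtain ⟨hκ0, hκ2⟩ := hκ
  obtain ⟨hξ0, hξ1⟩ := hξ
  set δ : ℝ := 1 - 2 * κ with hδdef
  have hδ0 : 0 < δ := by simp only [hδdef]; linarith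
  set c₀ : ℝ := min (C₁^2/720) (C₁/48) with hc₀def
  have hc₀pos : 0 < c₀ := lt_min (by positivity) (by positivity)
  obtain ⟨K, hK0, hKbound⟩ := growth_bound c₀ C₃ ξ δ hc₀pos hC₃ hξ0 hξ1
  refine ⟨Real.exp K, Real.exp_pos K, c₀/2, by positivity, ?_⟩
  intro n p X S E hn hlogp hX hindep hgauss hS hdiag _hposdef hE hmin
  have hn1 : (1:ℝ) ≤ (n:ℝ) := by exact_mod_cast hn
  have hn0 : (0:ℝ) < (n:ℝ) := by linarith
  have hp0 : (0:ℝ) < (p:ℝ) := by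
    by_contra h
    push_neg at h
    have hp0' : (p:ℝ) = 0 := le_antisymm h (Nat.cast_nonneg p)
    rw [hp0', Real.log_zero] at hlogp
    have : (0:ℝ) < C₃ * (n:ℝ) ^ ξ := by positivity
    linarith
  set τ : ℝ := C₁ * (n:ℝ) ^ (-κ) with hτdef
  have hτ0 : 0 < τ := by positivity
  set ε : ℝ := τ / 3 with hεdef
  have hε0 : 0 < ε := by positivity
  -- per-edge bound
  have hedge : ∀ e ∈ E,
      (μ {ω | ¬ ((2 / 3) * C₁ * (n : ℝ) ^ (-κ) <
        |∑ i, X i ω e.1 * X i ω e.2| / n)}).toReal ≤ Real.exp (-c₀ * (n:ℝ) ^ δ) := by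
    intro e he
    have hab : e.1 < e.2 := ((hE e.1 e.2).mp (by simpa using he)).1
    have hne : e.1 ≠ e.2 := ne_of_lt hab
    have hYmeas : ∀ i : Fin n, Measurable fun ω => X i ω e.1 :=
      fun i => (measurable_pi_apply e.1).comp (hX i)
    have hZmeas : ∀ i : Fin n, Measurable fun ω => X i ω e.2 :=
      fun i => (measurable_pi_apply e.2).comp (hX i)
    have hWmeas : ∀ i : Fin n, Measurable fun ω => X i ω e.1 * X i ω e.2 :=
      fun i => (hYmeas i).mul (hZmeas i)
    have hWindep : iIndepFun
        (fun i (ω : Ω) => X i ω e.1 * X i ω e.2) μ :=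
      hindep.comp (fun _ v => v e.1 * v e.2)
        (fun _ => (measurable_pi_apply e.1).mul (measurable_pi_apply e.2))
    have hmgfW : ∀ (i : Fin n) (t : ℝ), |t| ≤ 1/8 →
        Integrable (fun ω => Real.exp (t * (X i ω e.1 * X i ω e.2))) μ ∧
        mgf (fun ω => X i ω e.1 * X i ω e.2) μ t ≤
          Real.exp (S e.1 e.2 * t + 20 * t^2) := by
      intro i t ht
      -- Gaussian distributions of the relevant linear combinations
      have hYg : ∃ s : ℝ≥0, Measure.map (fun ω => X i ω e.1) μ = gaussianReal 0 s := by
        obtain ⟨s, hs⟩ := hgauss i (fun j => if j = e.1 then 1 else 0)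
        refine ⟨s, ?_⟩
        have hfun : (fun ω => ∑ j, (if j = e.1 then (1:ℝ) else 0) * X i ω j)
            = fun ω => X i ω e.1 := funext fun ω => sum_single e.1 (X i ω)
        rwa [hfun] at hs
      have hZg : ∃ s : ℝ≥0, Measure.map (fun ω => X i ω e.2) μ = gaussianReal 0 s := by
        obtain ⟨s, hs⟩ := hgauss i (fun j => if j = e.2 then 1 else 0)
        refine ⟨s, ?_⟩
        have hfun : (fun ω => ∑ j, (if j = e.2 then (1:ℝ) else 0) * X i ω j)
            = fun ω => X i ω e.2 := funext fun ω => sum_single e.2 (X i ω)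
        rwa [hfun] at hs
      have hAg : ∃ s : ℝ≥0,
          Measure.map (fun ω => X i ω e.1 + X i ω e.2) μ = gaussianReal 0 s := by
        obtain ⟨s, hs⟩ := hgauss i
          (fun j => (if j = e.1 then (1:ℝ) else 0) + (if j = e.2 then 1 else 0))
        refine ⟨s, ?_⟩
        have hfun : (fun ω => ∑ j,
            ((if j = e.1 then (1:ℝ) else 0) + (if j = e.2 then 1 else 0)) * X i ω j)
            = fun ω => X i ω e.1 + X i ω e.2 :=
          funext fun ω => sum_pair_add e.1 e.2 hne (X i ω)
        rwa [hfun] at hs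
      have hBg : ∃ s : ℝ≥0,
          Measure.map (fun ω => X i ω e.1 - X i ω e.2) μ = gaussianReal 0 s := by
        obtain ⟨s, hs⟩ := hgauss i
          (fun j => (if j = e.1 then (1:ℝ) else 0) - (if j = e.2 then 1 else 0))
        refine ⟨s, ?_⟩
        have hfun : (fun ω => ∑ j,
            ((if j = e.1 then (1:ℝ) else 0) - (if j = e.2 then 1 else 0)) * X i ω j)
            = fun ω => X i ω e.1 - X i ω e.2 :=
          funext fun ω => sum_pair_sub e.1 e.2 hne (X i ω)
        rwa [hfun] at hs
      -- integrability of squares and products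
      obtain ⟨sY, hsY⟩ := hYg
      obtain ⟨sZ, hsZ⟩ := hZg
      have hY2int : Integrable (fun ω => X i ω e.1 * X i ω e.1) μ := by
        have h := (map_gaussian_sq (hYmeas i) hsY).1
        simpa [pow_two] using h
      have hZ2int : Integrable (fun ω => X i ω e.2 * X i ω e.2) μ := by
        have h := (map_gaussian_sq (hZmeas i) hsZ).1
        simpa [pow_two] using h
      have hYZint : Integrable (fun ω => X i ω e.1 * X i ω e.2) μ := by
        refine ((hY2int.add hZ2int).div_const 2).mono'
          ((hWmeas i).aestronglyMeasurable) (Filter.Eventually.of_forall fun ω => ?_)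
        rw [Real.norm_eq_abs]
        have h2 := two_mul_le_add_sq |X i ω e.1| |X i ω e.2|
        have ha : |X i ω e.1| ^ 2 = X i ω e.1 * X i ω e.1 := by
          rw [sq_abs]; ring
        have hb : |X i ω e.2| ^ 2 = X i ω e.2 * X i ω e.2 := by
          rw [sq_abs]; ring
        rw [abs_mul]
        simp only [Pi.add_apply]
        nlinarith [abs_nonneg (X i ω e.1), abs_nonneg (X i ω e.2)]
      exact core_mgf μ (fun ω => X i ω e.1) (fun ω => X i ω e.2) (hYmeas i) (hZmeas i)
        (S e.1 e.2) hAg hBg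
        (by rw [hS i e.1 e.1, hdiag]) (by rw [hS i e.2 e.2, hdiag])
        hYZint hY2int hZ2int (hS i e.1 e.2) ht
    have htail := edge_tail μ n (fun i ω => X i ω e.1 * X i ω e.2) hWmeas hWindep
      (S e.1 e.2) hmgfW ε hε0
    -- exponent comparison
    have hexpo : Real.exp (-(min (ε^2/80) (ε/16)) * n) ≤ Real.exp (-c₀ * (n:ℝ) ^ δ) := by
      apply Real.exp_le_exp.2
      have hsq : ε^2/80 * n = C₁^2/720 * (n:ℝ) ^ δ := by
        have h1 : ((n:ℝ) ^ (-κ))^2 = (n:ℝ) ^ (-(2*κ)) := by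
          rw [← Real.rpow_natCast ((n:ℝ) ^ (-κ)) 2, ← Real.rpow_mul hn0.le]
          norm_num
          ring_nf
        have h2 : (n:ℝ) ^ (-(2*κ)) * (n:ℝ) = (n:ℝ) ^ δ := by
          nth_rewrite 2 [← Real.rpow_one (n:ℝ)]
          rw [← Real.rpow_add hn0, hδdef]
          ring_nf
        rw [hεdef, hτdef]
        calc (C₁ * (n:ℝ)^(-κ)/3)^2/80 * n = C₁^2/720 * (((n:ℝ)^(-κ))^2 * n) := by ring
          _ = C₁^2/720 * (n:ℝ)^δ := by rw [h1, h2]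
      have hlin : C₁/48 * (n:ℝ) ^ δ ≤ ε/16 * n := by
        have h2 : (n:ℝ) ^ (-κ) * (n:ℝ) = (n:ℝ) ^ (1-κ) := by
          nth_rewrite 2 [← Real.rpow_one (n:ℝ)]
          rw [← Real.rpow_add hn0]
          ring_nf
        have h3 : (n:ℝ) ^ δ ≤ (n:ℝ) ^ (1-κ) :=
          Real.rpow_le_rpow_of_exponent_le hn1 (by rw [hδdef]; linarith)
        calc C₁/48 * (n:ℝ) ^ δ ≤ C₁/48 * (n:ℝ) ^ (1-κ) :=
              mul_le_mul_of_nonneg_left h3 (by positivity)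
          _ = C₁ * (n:ℝ)^(-κ)/3/16 * n := by rw [← h2]; ring
          _ = ε/16 * n := by rw [hεdef, hτdef]
      have hmin2 : c₀ * (n:ℝ) ^ δ ≤ min (ε^2/80) (ε/16) * n := by
        rw [min_mul_of_nonneg _ _ hn0.le]
        apply le_min
        · calc c₀ * (n:ℝ)^δ ≤ C₁^2/720 * (n:ℝ)^δ :=
              mul_le_mul_of_nonneg_right (min_le_left _ _) (by positivity)
            _ = ε^2/80 * n := hsq.symm
        · calc c₀ * (n:ℝ)^δ ≤ C₁/48 * (n:ℝ)^δ :=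
              mul_le_mul_of_nonneg_right (min_le_right _ _) (by positivity)
            _ ≤ ε/16 * n := hlin
      linarith
    -- sign cases
    have hτabs := hmin e he
    have hγτ : (2 / 3) * C₁ * (n : ℝ) ^ (-κ) = τ - ε := by
      rw [hεdef, hτdef]; ring
    rcases le_abs.mp hτabs with hpos | hneg
    · -- S e.1 e.2 ≥ τ
      have hsub : {ω : Ω | ¬ ((2 / 3) * C₁ * (n : ℝ) ^ (-κ) <
          |∑ i, X i ω e.1 * X i ω e.2| / n)} ⊆
          {ω : Ω | (∑ i, X i ω e.1 * X i ω e.2) ≤ n * (S e.1 e.2 - ε)} := by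
        intro ω hω
        simp only [Set.mem_setOf_eq, not_lt] at hω ⊢
        have h1 : |∑ i, X i ω e.1 * X i ω e.2| ≤ ((2 / 3) * C₁ * (n : ℝ) ^ (-κ)) * n := by
          rw [← div_le_iff₀ hn0] at *
          exact hω
        calc (∑ i, X i ω e.1 * X i ω e.2) ≤ |∑ i, X i ω e.1 * X i ω e.2| := le_abs_self _
          _ ≤ ((2 / 3) * C₁ * (n : ℝ) ^ (-κ)) * n := h1
          _ = (τ - ε) * n := by rw [hγτ]
          _ ≤ (S e.1 e.2 - ε) * n := by
              apply mul_le_mul_of_nonneg_right _ hn0.le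
              linarith
          _ = n * (S e.1 e.2 - ε) := by ring
      calc (μ _).toReal ≤ (μ {ω : Ω | (∑ i, X i ω e.1 * X i ω e.2) ≤
            n * (S e.1 e.2 - ε)}).toReal :=
            ENNReal.toReal_mono (measure_ne_top μ _) (measure_mono hsub)
        _ ≤ Real.exp (-(min (ε^2/80) (ε/16)) * n) := htail.1
        _ ≤ Real.exp (-c₀ * (n:ℝ) ^ δ) := hexpo
    · -- S e.1 e.2 ≤ -τ
      have hsub : {ω : Ω | ¬ ((2 / 3) * C₁ * (n : ℝ) ^ (-κ) <
          |∑ i, X i ω e.1 * X i ω e.2| / n)} ⊆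
          {ω : Ω | (n:ℝ) * (S e.1 e.2 + ε) ≤ ∑ i, X i ω e.1 * X i ω e.2} := by
        intro ω hω
        simp only [Set.mem_setOf_eq, not_lt] at hω ⊢
        have h1 : |∑ i, X i ω e.1 * X i ω e.2| ≤ ((2 / 3) * C₁ * (n : ℝ) ^ (-κ)) * n := by
          rw [← div_le_iff₀ hn0] at *
          exact hω
        have hS2 : S e.1 e.2 ≤ -τ := by linarith
        calc (n:ℝ) * (S e.1 e.2 + ε) ≤ (n:ℝ) * (-(τ - ε)) := by
              apply mul_le_mul_of_nonneg_left _ hn0.le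
              linarith
          _ = -(((2 / 3) * C₁ * (n : ℝ) ^ (-κ)) * n) := by rw [hγτ]; ring
          _ ≤ -|∑ i, X i ω e.1 * X i ω e.2| := by linarith
          _ ≤ ∑ i, X i ω e.1 * X i ω e.2 := neg_abs_le _
      calc (μ _).toReal ≤ (μ {ω : Ω | (n:ℝ) * (S e.1 e.2 + ε) ≤
            ∑ i, X i ω e.1 * X i ω e.2}).toReal :=
            ENNReal.toReal_mono (measure_ne_top μ _) (measure_mono hsub)
        _ ≤ Real.exp (-(min (ε^2/80) (ε/16)) * n) := htail.2
        _ ≤ Real.exp (-c₀ * (n:ℝ) ^ δ) := hexpo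
  -- union bound
  set Good : Set Ω := {ω | ∀ e ∈ E,
      (2 / 3) * C₁ * (n : ℝ) ^ (-κ) < |∑ i, X i ω e.1 * X i ω e.2| / n} with hGood
  have hcompl : Goodᶜ ⊆ ⋃ e ∈ E, {ω : Ω | ¬ ((2 / 3) * C₁ * (n : ℝ) ^ (-κ) <
      |∑ i, X i ω e.1 * X i ω e.2| / n)} := by
    intro ω hω
    simp only [hGood, Set.mem_compl_iff, Set.mem_setOf_eq, not_forall] at hω
    obtain ⟨e, he, hne'⟩ := hω
    exact Set.mem_biUnion he hne'
  have hub : (μ Goodᶜ).toReal ≤ Real.exp K * Real.exp (-(c₀/2) * (n:ℝ) ^ δ) := by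
    have h1 : μ Goodᶜ ≤ ∑ e ∈ E, μ {ω : Ω | ¬ ((2 / 3) * C₁ * (n : ℝ) ^ (-κ) <
        |∑ i, X i ω e.1 * X i ω e.2| / n)} :=
      (measure_mono hcompl).trans (measure_biUnion_finset_le E _)
    have h2 : (μ Goodᶜ).toReal ≤ ∑ e ∈ E, (μ {ω : Ω | ¬ ((2 / 3) * C₁ * (n : ℝ) ^ (-κ) <
        |∑ i, X i ω e.1 * X i ω e.2| / n)}).toReal := by
      refine (ENNReal.toReal_mono ?_ h1).trans_eq
        (ENNReal.toReal_sum fun e _ => measure_ne_top μ _)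
      exact (ENNReal.sum_lt_top.mpr fun e _ => measure_lt_top μ _).ne
    have h3 : ∑ e ∈ E, (μ {ω : Ω | ¬ ((2 / 3) * C₁ * (n : ℝ) ^ (-κ) <
        |∑ i, X i ω e.1 * X i ω e.2| / n)}).toReal ≤
        (E.card : ℝ) * Real.exp (-c₀ * (n:ℝ) ^ δ) := by
      calc _ ≤ ∑ _e ∈ E, Real.exp (-c₀ * (n:ℝ) ^ δ) := Finset.sum_le_sum hedge
        _ = (E.card : ℝ) * Real.exp (-c₀ * (n:ℝ) ^ δ) := by
            rw [Finset.sum_const, nsmul_eq_mul]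
    have hcard : (E.card : ℝ) ≤ (p:ℝ)^2 := by
      have h := Finset.card_le_univ E
      have h2 : Fintype.card (Fin p × Fin p) = p * p := by
        rw [Fintype.card_prod, Fintype.card_fin]
      have : E.card ≤ p * p := h2 ▸ h
      calc (E.card : ℝ) ≤ ((p * p : ℕ) : ℝ) := by exact_mod_cast this
        _ = (p:ℝ)^2 := by push_cast; ring
    have hp2 : ((p:ℝ))^2 = Real.exp (2 * Real.log p) := by
      rw [two_mul, Real.exp_add, Real.exp_log hp0]; ring
    have h4 : (E.card : ℝ) * Real.exp (-c₀ * (n:ℝ) ^ δ) ≤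
        Real.exp (2 * Real.log p - c₀ * (n:ℝ) ^ δ) := by
      rw [Real.exp_sub, ← hp2]
      rw [div_eq_mul_inv, ← Real.exp_neg]
      calc (E.card : ℝ) * Real.exp (-c₀ * (n:ℝ) ^ δ) ≤
            (p:ℝ)^2 * Real.exp (-c₀ * (n:ℝ) ^ δ) :=
            mul_le_mul_of_nonneg_right hcard (Real.exp_pos _).le
        _ = (p:ℝ)^2 * Real.exp (-(c₀ * (n:ℝ) ^ δ)) := by ring_nf
    have h5 : 2 * Real.log p - c₀ * (n:ℝ) ^ δ ≤ K + (-(c₀/2) * (n:ℝ) ^ δ) := by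
      have hKb := hKbound n hn
      rw [hlogp]
      have : 2 * (C₃ * (n:ℝ) ^ ξ) = 2 * C₃ * (n:ℝ) ^ ξ := by ring
      rw [this]
      linarith
    calc (μ Goodᶜ).toReal ≤ _ := h2
      _ ≤ (E.card : ℝ) * Real.exp (-c₀ * (n:ℝ) ^ δ) := h3
      _ ≤ Real.exp (2 * Real.log p - c₀ * (n:ℝ) ^ δ) := h4
      _ ≤ Real.exp (K + (-(c₀/2) * (n:ℝ) ^ δ)) := Real.exp_le_exp.2 h5
      _ = Real.exp K * Real.exp (-(c₀/2) * (n:ℝ) ^ δ) := Real.exp_add _ _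
  -- conclude
  have htotal : 1 ≤ (μ Good).toReal + (μ Goodᶜ).toReal := by
    have h1 : (1:ℝ≥0∞) = μ (Good ∪ Goodᶜ) := by rw [Set.union_compl_self]; simp
    have h2 : μ (Good ∪ Goodᶜ) ≤ μ Good + μ Goodᶜ := measure_union_le _ _
    have h3 : (1:ℝ≥0∞) ≤ μ Good + μ Goodᶜ := h1.le.trans h2
    have h4 := ENNReal.toReal_mono (a := (1:ℝ≥0∞)) (b := μ Good + μ Goodᶜ)
      (by simp [ENNReal.add_ne_top, measure_ne_top]) h3
    rwa [ENNReal.toReal_one, ENNReal.toReal_add (measure_ne_top μ _) (measure_ne_top μ _)] at h4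
  have hfin : 1 - Real.exp K * Real.exp (-(c₀/2) * (n:ℝ) ^ δ) ≤ (μ Good).toReal := by
    linarith
  exact hfin
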